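/- Let G be a subcubic graph with a feasible coloring f (a (1,1,2,2,3,3)-coloring with labeled classes 1_a,1_b,2_a,2_b,3_a,3_b), and let u be a vertex of degree 2 with neighbors u_1, u_2. If {f(u_1), f(u_2)} ≠ {1_a, 1_b}, then there is a feasible coloring g of G that agrees with f on all vertices except u and satisfies g(u) ∈ {1_a, 1_b}. -/

import Mathlib

open SimpleGraph

/-- The subdivision `D(G)` of a graph `G`: every edge is subdivided once. -/
def Subdivision {V : Type*} (G : SimpleGraph V) : SimpleGraph (V ⊕ G.edgeSet) where
  Adj x y := match x, y with
    | Sum.inl v, Sum.inr e => v ∈ (e : Sym2 V)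
    | Sum.inr e, Sum.inl v => v ∈ (e : Sym2 V)
    | _, _ => False
  symm := ⟨by rintro (v|e) (w|f) h <;> simp_all⟩
  loopless := ⟨by rintro (v|e) h <;> simp_all⟩

/-- `c` is an `S`-coloring of `G` where `s` gives the distance requirements:
two distinct vertices of color `i` must be at distance at least `s i + 1`. -/
def IsSColoring {V : Type*} {k : ℕ} (G : SimpleGraph V) (s : Fin k → ℕ) (c : V → Fin k) : Prop :=
  ∀ u v : V, u ≠ v → c u = c v → (↑(s (c u) + 1) : ℕ∞) ≤ G.edist u v

/-- `c` is a packing `k`-coloring of `G` with colors `1,…,k`. -/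
def IsPackingColoring {V : Type*} (G : SimpleGraph V) (k : ℕ) (c : V → ℕ) : Prop :=
  (∀ v, 1 ≤ c v ∧ c v ≤ k) ∧
  ∀ u v : V, u ≠ v → c u = c v → (↑(c u + 1) : ℕ∞) ≤ G.edist u v

/-- A graph is 2-degenerate: every (finite, induced) subgraph has a vertex of degree at most 2. -/
def TwoDegenerate {V : Type*} [DecidableEq V] (G : SimpleGraph V) [DecidableRel G.Adj] : Prop :=
  ∀ W : Finset V, W.Nonempty → ∃ v ∈ W, (W.filter (fun w => G.Adj v w)).card ≤ 2

/-- A feasible coloring: colors `0,1,2,3,4,5` stand for `1_a,1_b,2_a,2_b,3_a,3_b`,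
with vertices of color `i_x` pairwise at distance at least `i+1`. -/
theorem stmt10 {V : Type*} [Fintype V] [DecidableEq V] (G : SimpleGraph V) [DecidableRel G.Adj]
    (hsubcubic : ∀ v, G.degree v ≤ 3)
    (f : V → Fin 6) (hf : IsSColoring G ![1, 1, 2, 2, 3, 3] f)
    (u u1 u2 : V) (hNu : G.neighborSet u = {u1, u2}) (h12 : u1 ≠ u2)
    (hcol : ({f u1, f u2} : Set (Fin 6)) ≠ ({0, 1} : Set (Fin 6))) :
    ∃ g : V → Fin 6, IsSColoring G ![1, 1, 2, 2, 3, 3] g ∧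
      (∀ v : V, v ≠ u → g v = f v) ∧ g u ∈ ({0, 1} : Set (Fin 6)) := by
  -- pick a color c ∈ {0,1} not used by u1, u2
  obtain ⟨c, hc01, hcne1, hcne2⟩ : ∃ c : Fin 6, c ∈ ({0, 1} : Set (Fin 6)) ∧
      c ≠ f u1 ∧ c ≠ f u2 := by
    by_contra h
    push_neg at h
    have h0 := h 0 (Or.inl rfl)
    have h1 := h 1 (Or.inr rfl)
    apply hcol
    have h0' : f u1 = 0 ∨ f u2 = 0 := by
      rcases Classical.em ((0 : Fin 6) = f u1) with e | e
      · exact Or.inl e.symm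
      · exact Or.inr (h0 e).symm
    have h1' : f u1 = 1 ∨ f u2 = 1 := by
      rcases Classical.em ((1 : Fin 6) = f u1) with e | e
      · exact Or.inl e.symm
      · exact Or.inr (h1 e).symm
    rcases h0' with a | a <;> rcases h1' with b | b
    · rw [a] at b; exact absurd b (by decide)
    · rw [a, b]
    · rw [b, a]; exact Set.pair_comm _ _
    · rw [a] at b; exact absurd b (by decide)
  refine ⟨Function.update f u c, ?_, fun v hv => Function.update_of_ne hv _ _, by
    simp only [Function.update_self]; exact hc01⟩
  -- helper: any vertex with color c is not adjacent to u
  have hnotadj : ∀ w : V, f w = c → ¬ G.Adj u w := by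
    intro w hw hadj
    have : w ∈ G.neighborSet u := hadj
    rw [hNu] at this
    rcases this with h | h
    · exact hcne1 (h ▸ hw).symm
    · exact hcne2 (by rw [← hw, h])
  have hdist : ∀ w : V, w ≠ u → f w = c → (2 : ℕ∞) ≤ G.edist u w := by
    intro w hwu hwc
    have hne : u ≠ w := fun e => hwu e.symm
    have h1 : G.edist u w ≠ 1 := fun e =>
      hnotadj w hwc (SimpleGraph.edist_eq_one_iff_adj.mp e)
    have h0 : G.edist u w ≠ 0 := fun e =>
      hne (SimpleGraph.edist_eq_zero_iff.mp e)
    have hle : (1 : ℕ∞) ≤ G.edist u w := ENat.one_le_iff_ne_zero.mpr h0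
    have : (1 : ℕ∞) < G.edist u w := lt_of_le_of_ne hle (fun e => h1 e.symm)
    exact Order.add_one_le_of_lt this
  have hsc : (![1, 1, 2, 2, 3, 3] : Fin 6 → ℕ) c = 1 := by
    rcases hc01 with h | h <;> subst h <;> rfl
  intro v w hvw heq
  by_cases hvu : v = u <;> by_cases hwu : w = u
  · exact absurd (hvu.trans hwu.symm) hvw
  · subst hvu
    rw [Function.update_self] at heq ⊢
    rw [Function.update_of_ne hwu] at heq
    rw [hsc]
    exact hdist w hwu heq.symm
  · subst hwu
    rw [Function.update_self] at heq
    rw [Function.update_of_ne hvu] at heq ⊢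
    rw [heq, hsc]
    rw [G.edist_comm]
    exact hdist v hvu heq
  · rw [Function.update_of_ne hvu] at heq ⊢
    rw [Function.update_of_ne hwu] at heq
    exact hf v w hvw heq
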